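/- With the same setup (h : ℤ* → ℤ/2ℤ, proximity P, cylinder sets C_k, map τ¹_*): if k ≥ 2, P(h) = k, and h ∉ C_k, then either P(τ¹_*(h)) = k−1 and τ¹_*(h) ∉ C_{k−1}, or P(τ²_*(h)) = k−1 and τ²_*(h) ∉ C_{k−1}, where τ²_* = τ¹_* ∘ τ¹_*. -/
import Mathlib


/-- The map `τ¹_*` on functions `ℤ* → ℤ/2ℤ` (encoded as functions on `ℤ` whose value at
`0` is irrelevant and set to `0`). -/
def tau1 (h : ℤ → ZMod 2) : ℤ → ZMod 2 := fun i =>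
  if i < -2 then h (-i) + h (i - 1) + h i + h (i + 1)
  else if i = -2 then h (-i) + h (-2) + h (-3)
  else if i = -1 then h (-i) + h (-2)
  else if i = 0 then 0
  else h (-i)

/-- The map `τ⁻¹_*` on functions `ℤ* → ℤ/2ℤ`. -/
def tauNeg1 (h : ℤ → ZMod 2) : ℤ → ZMod 2 := fun i =>
  if i < 0 then h (-i)
  else if i = 0 then 0
  else if i = 1 then h (-i) + h 2
  else if i = 2 then h (-i) + h 2 + h 3
  else h (-i) + h (i - 1) + h i + h (i + 1)

/-- The cylinder set `C_k = {h : h(k) = h(-k-1) = 1, h(i) = 0 for -k-1 < i < k, i ≠ 0}`. -/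
def Cyl (k : ℤ) : Set (ℤ → ZMod 2) :=
  {h | h k = 1 ∧ h (-k - 1) = 1 ∧ ∀ i : ℤ, -k - 1 < i → i < k → i ≠ 0 → h i = 0}

/-- `HasProx h k` says the proximity `P(h) = min {|i| : h(i) ≠ 0}` equals `k`. -/
def HasProx (h : ℤ → ZMod 2) (k : ℤ) : Prop :=
  (h k ≠ 0 ∨ h (-k) ≠ 0) ∧ ∀ i : ℤ, i ≠ 0 → |i| < k → h i = 0

lemma zmod2_eq_one : ∀ {a : ZMod 2}, a ≠ 0 → a = 1 := by decide

/-- Key computation: if `h` vanishes on `0 < |i| < k` (with `k ≥ 2`), then `τ¹_* h` takes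
explicit values near the boundary and vanishes on `0 < |i| < k - 1`. -/
lemma tau1_calc (k : ℤ) (hk : 2 ≤ k) (h : ℤ → ZMod 2)
    (h0 : ∀ i : ℤ, i ≠ 0 → -k < i → i < k → h i = 0) :
    tau1 h (-(k-1)) = h (-k) ∧ tau1 h (k-1) = 0 ∧
    (∀ i : ℤ, i ≠ 0 → -(k-1) < i → i < k-1 → tau1 h i = 0) ∧
    tau1 h (-k) = h k + h (-k) + h (-k-1) ∧ tau1 h k = h (-k) := by
  refine ⟨?_, ?_, ?_, ?_, ?_⟩
  · rcases lt_trichotomy k 3 with h2 | h2 | h2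
    · have : k = 2 := by omega
      subst this
      norm_num [tau1]
      exact h0 1 (by norm_num) (by norm_num) (by norm_num)
    · subst h2
      norm_num [tau1]
      rw [h0 2 (by norm_num) (by norm_num) (by norm_num),
        h0 (-2) (by norm_num) (by norm_num) (by norm_num)]
      norm_num
    · have hlt : -(k-1) < -2 := by omega
      simp only [tau1, if_pos hlt]
      have e1 : -(-(k-1)) = k - 1 := by ring
      have e2 : -(k-1) - 1 = -k := by ring
      have e3 : -(k-1) + 1 = -(k-2) := by ring
      rw [e1, e2, e3, h0 (k-1) (by omega) (by omega) (by omega),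
        h0 (-(k-1)) (by omega) (by omega) (by omega),
        h0 (-(k-2)) (by omega) (by omega) (by omega)]
      ring
  · have h1 : ¬ (k - 1 < -2) := by omega
    have h2 : ¬ (k - 1 = -2) := by omega
    have h3 : ¬ (k - 1 = -1) := by omega
    have h4 : ¬ (k - 1 = 0) := by omega
    simp only [tau1, if_neg h1, if_neg h2, if_neg h3, if_neg h4]
    exact h0 (-(k-1)) (by omega) (by omega) (by omega)
  · intro i hi hli hri
    rcases lt_trichotomy i 0 with hneg | h0' | hpos
    · rcases lt_trichotomy i (-2) with hlt | heq | hgt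
      · simp only [tau1, if_pos hlt]
        rw [h0 (-i) (by omega) (by omega) (by omega),
          h0 (i-1) (by omega) (by omega) (by omega),
          h0 i (by omega) (by omega) (by omega),
          h0 (i+1) (by omega) (by omega) (by omega)]
        ring
      · subst heq
        norm_num [tau1]
        rw [h0 2 (by omega) (by omega) (by omega),
          h0 (-2) (by omega) (by omega) (by omega),
          h0 (-3) (by omega) (by omega) (by omega)]
        norm_num
      · have : i = -1 := by omega
        subst this
        norm_num [tau1]
        rw [h0 1 (by omega) (by omega) (by omega),
          h0 (-2) (by omega) (by omega) (by omega)]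
        norm_num
    · exact absurd h0' hi
    · have h1 : ¬ (i < -2) := by omega
      have h2 : ¬ (i = -2) := by omega
      have h3 : ¬ (i = -1) := by omega
      have h4 : ¬ (i = 0) := by omega
      simp only [tau1, if_neg h1, if_neg h2, if_neg h3, if_neg h4]
      exact h0 (-i) (by omega) (by omega) (by omega)
  · rcases lt_trichotomy k 3 with h2 | h2 | h2
    · have : k = 2 := by omega
      subst this
      norm_num [tau1]
    · subst h2
      norm_num [tau1]
      rw [h0 (-2) (by norm_num) (by norm_num) (by norm_num)]
      ring
    · have hlt : -k < -2 := by omega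
      simp only [tau1, if_pos hlt]
      have e1 : -(-k) = k := by ring
      have e3 : -k + 1 = -(k-1) := by ring
      rw [e1, e3, h0 (-(k-1)) (by omega) (by omega) (by omega)]
      ring
  · have h1 : ¬ (k < -2) := by omega
    have h2 : ¬ (k = -2) := by omega
    have h3 : ¬ (k = -1) := by omega
    have h4 : ¬ (k = 0) := by omega
    simp only [tau1, if_neg h1, if_neg h2, if_neg h3, if_neg h4]

/-- If `k ≥ 2`, `P(h) = k`, and `h ∉ C_k`, then either `P(τ¹_*(h)) = k - 1` and
`τ¹_*(h) ∉ C_{k-1}`, or `P(τ²_*(h)) = k - 1` and `τ²_*(h) ∉ C_{k-1}`. -/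
theorem stmt13 (k : ℤ) (hk : 2 ≤ k) (h : ℤ → ZMod 2)
    (hP : HasProx h k) (hC : h ∉ Cyl k) :
    (HasProx (tau1 h) (k - 1) ∧ tau1 h ∉ Cyl (k - 1)) ∨
    (HasProx (tau1 (tau1 h)) (k - 1) ∧ tau1 (tau1 h) ∉ Cyl (k - 1)) := by
  obtain ⟨hne, hz⟩ := hP
  have h0 : ∀ i : ℤ, i ≠ 0 → -k < i → i < k → h i = 0 := fun i hi h1 h2 =>
    hz i hi (abs_lt.mpr ⟨h1, h2⟩)
  obtain ⟨e1, e2, e3, e4, e5⟩ := tau1_calc k hk h h0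
  by_cases hmk : h (-k) = 0
  · -- h(-k) = 0, so h(k) = 1 and (since h ∉ C_k) h(-k-1) = 0; two steps needed
    have hk1 : h k = 1 := by
      rcases hne with h' | h'
      · exact zmod2_eq_one h'
      · exact absurd hmk h'
    have hk2 : h (-k-1) = 0 := by
      by_contra hc
      refine hC ⟨hk1, zmod2_eq_one hc, fun i h1 h2 h3 => ?_⟩
      rcases eq_or_ne i (-k) with rfl | hik
      · exact hmk
      · exact h0 i h3 (by omega) h2
    right
    have g0 : ∀ i : ℤ, i ≠ 0 → -k < i → i < k → tau1 h i = 0 := by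
      intro i hi h1 h2
      rcases lt_trichotomy i (k-1) with hl | heq | hgt
      · rcases lt_trichotomy (-(k-1)) i with hl' | heq' | hgt'
        · exact e3 i hi hl' hl
        · rw [← heq', e1]; exact hmk
        · omega
      · rw [heq, e2]
      · omega
    obtain ⟨f1, f2, f3, f4, f5⟩ := tau1_calc k hk (tau1 h) g0
    have hgmk : tau1 h (-k) = 1 := by rw [e4, hk1, hmk, hk2]; norm_num
    refine ⟨⟨Or.inr ?_, ?_⟩, ?_⟩
    · rw [f1, hgmk]; exact one_ne_zero
    · intro i hi habs
      obtain ⟨ha1, ha2⟩ := abs_lt.mp habs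
      exact f3 i hi (by omega) ha2
    · intro hmem
      obtain ⟨hm1, -, -⟩ := hmem
      rw [f2] at hm1
      exact absurd hm1 (by decide)
  · -- h(-k) = 1: one step suffices
    left
    refine ⟨⟨Or.inr ?_, ?_⟩, ?_⟩
    · rw [e1, zmod2_eq_one hmk]; exact one_ne_zero
    · intro i hi habs
      obtain ⟨ha1, ha2⟩ := abs_lt.mp habs
      exact e3 i hi (by omega) ha2
    · intro hmem
      obtain ⟨hm1, -, -⟩ := hmem
      rw [e2] at hm1
      exact absurd hm1 (by decide)
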